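/- arXiv:2505.21493 — 2 statements merged into one kernel-verified Lean document; each statement's English description precedes it below -/
import Mathlib

section
/- Let Z, Y be finite sets, π_Z a pmf on Z, π_Y(·|z) a pmf on Y, y* ∈ Y, and g : Z → ℝ. Define G_ver(z,y) = 1{y=y*}·g(z) and G_vf(z) = π_Y(y*|z)·g(z). Then Var_{z,y}[G_ver] ≥ Var_z[G_vf], where the variance on the left is over the joint distribution of (z,y) and on the right over z ~ π_Z. -/
/-- Rao-Blackwell variance reduction (scalar version):
Var_{z,y}[1{y=y*} g(z)] ≥ Var_z[π_Y(y*|z) g(z)]. -/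
theorem verifree_variance_reduction
    {Z Y : Type*} [Fintype Z] [Fintype Y] [DecidableEq Y]
    (πZ : Z → ℝ) (hπZ : ∀ z, 0 ≤ πZ z) (hπZsum : ∑ z, πZ z = 1)
    (πY : Z → Y → ℝ) (hπY : ∀ z y, 0 ≤ πY z y) (hπYsum : ∀ z, ∑ y, πY z y = 1)
    (ystar : Y) (g : Z → ℝ) :
    (∑ z, πZ z * (πY z ystar * g z) ^ 2)
        - (∑ z, πZ z * (πY z ystar * g z)) ^ 2
      ≤ (∑ z, πZ z * ∑ y, πY z y * ((if y = ystar then (1 : ℝ) else 0) * g z) ^ 2)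
        - (∑ z, πZ z * ∑ y, πY z y * ((if y = ystar then (1 : ℝ) else 0) * g z)) ^ 2 := by
  have hle : ∀ z, πY z ystar ≤ 1 := by
    intro z
    rw [← hπYsum z]
    exact Finset.single_le_sum (fun y _ => hπY z y) (Finset.mem_univ ystar)
  have h1 : ∀ z, (∑ y, πY z y * ((if y = ystar then (1 : ℝ) else 0) * g z))
      = πY z ystar * g z := by
    intro z
    rw [Finset.sum_eq_single ystar]
    · simp
    · intro y _ hy; simp [hy]
    · simp
  have h2 : ∀ z, (∑ y, πY z y * ((if y = ystar then (1 : ℝ) else 0) * g z) ^ 2)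
      = πY z ystar * g z ^ 2 := by
    intro z
    rw [Finset.sum_eq_single ystar]
    · simp
    · intro y _ hy; simp [hy]
    · simp
  simp only [h1, h2]
  have hmom : ∀ z, πZ z * (πY z ystar * g z) ^ 2 ≤ πZ z * (πY z ystar * g z ^ 2) := by
    intro z
    apply mul_le_mul_of_nonneg_left _ (hπZ z)
    rw [mul_pow]
    have : πY z ystar ^ 2 ≤ πY z ystar := by
      nlinarith [hπY z ystar, hle z]
    nlinarith [sq_nonneg (g z)]
  have hsum : (∑ z, πZ z * (πY z ystar * g z) ^ 2) ≤ ∑ z, πZ z * (πY z ystar * g z ^ 2) :=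
    Finset.sum_le_sum (fun z _ => hmom z)
  linarith
end

section
/- Let Z, Y be finite sets, π_Z a pmf on Z, π_Y(·|z) a pmf on Y, y* ∈ Y, and g, h : Z → ℝ. Define the full verifier estimator Ĝ(z,y) = 1{y=y*}(g(z) + h(z)) and the full VeriFree estimator Ĝ'(z) = π_Y(y*|z)(g(z) + h(z)). Then E_{z,y}[Ĝ] = E_z[Ĝ'] and Var_{z,y}[Ĝ] ≥ Var_z[Ĝ']. -/
/-- Full-gradient scalar abstraction: with Ĝ(z,y)=1{y=y*}(g(z)+h(z)) and
Ĝ'(z)=π_Y(y*|z)(g(z)+h(z)), the means agree and Var[Ĝ] ≥ Var[Ĝ']. -/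
theorem verifree_full_estimator
    {Z Y : Type*} [Fintype Z] [Fintype Y] [DecidableEq Y]
    (πZ : Z → ℝ) (hπZ : ∀ z, 0 ≤ πZ z) (hπZsum : ∑ z, πZ z = 1)
    (πY : Z → Y → ℝ) (hπY : ∀ z y, 0 ≤ πY z y) (hπYsum : ∀ z, ∑ y, πY z y = 1)
    (ystar : Y) (g h : Z → ℝ) :
    (∑ z, πZ z * ∑ y, πY z y * ((if y = ystar then (1 : ℝ) else 0) * (g z + h z))
        = ∑ z, πZ z * (πY z ystar * (g z + h z)))
    ∧ (∑ z, πZ z * (πY z ystar * (g z + h z)) ^ 2)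
          - (∑ z, πZ z * (πY z ystar * (g z + h z))) ^ 2
        ≤ (∑ z, πZ z * ∑ y, πY z y * ((if y = ystar then (1 : ℝ) else 0) * (g z + h z)) ^ 2)
          - (∑ z, πZ z * ∑ y, πY z y * ((if y = ystar then (1 : ℝ) else 0) * (g z + h z))) ^ 2 := by
  have hmean : ∀ z, (∑ y, πY z y * ((if y = ystar then (1 : ℝ) else 0) * (g z + h z)))
      = πY z ystar * (g z + h z) := by
    intro z
    rw [Finset.sum_eq_single ystar]
    · simp
    · intro y _ hy; simp [hy]
    · simp
  have hsq : ∀ z, (∑ y, πY z y * ((if y = ystar then (1 : ℝ) else 0) * (g z + h z)) ^ 2)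
      = πY z ystar * (g z + h z) ^ 2 := by
    intro z
    rw [Finset.sum_eq_single ystar]
    · simp
    · intro y _ hy; simp [hy]
    · simp
  have h1 : (∑ z, πZ z * ∑ y, πY z y * ((if y = ystar then (1 : ℝ) else 0) * (g z + h z)))
      = ∑ z, πZ z * (πY z ystar * (g z + h z)) := by
    exact Finset.sum_congr rfl fun z _ => by rw [hmean]
  refine ⟨h1, ?_⟩
  rw [h1]
  have h2 : (∑ z, πZ z * ∑ y, πY z y * ((if y = ystar then (1 : ℝ) else 0) * (g z + h z)) ^ 2)
      = ∑ z, πZ z * (πY z ystar * (g z + h z) ^ 2) := by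
    exact Finset.sum_congr rfl fun z _ => by rw [hsq]
  rw [h2]
  have key : (∑ z, πZ z * (πY z ystar * (g z + h z)) ^ 2)
      ≤ ∑ z, πZ z * (πY z ystar * (g z + h z) ^ 2) := by
    apply Finset.sum_le_sum
    intro z _
    apply mul_le_mul_of_nonneg_left _ (hπZ z)
    rw [mul_pow]
    have hle1 : πY z ystar ≤ 1 := by
      rw [← hπYsum z]
      exact Finset.single_le_sum (fun y _ => hπY z y) (Finset.mem_univ ystar)
    have : πY z ystar ^ 2 ≤ πY z ystar := by nlinarith [hπY z ystar]
    nlinarith [sq_nonneg (g z + h z)]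
  linarith
end
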